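/- Stability of quantiles under deletion: let S ∈ ℝ^N be a vector and let S' ∈ ℝ^{N-τ} be any subvector of S obtained by deleting exactly τ entries (0 ≤ τ ≤ N-1). Then for any a ∈ [0,1], Quantile_{(1-a)·(N-τ)/N}(S) ≤ Quantile_{1-a}(S') ≤ Quantile_{1-a·(N-τ)/N}(S). -/

import Mathlib

open MeasureTheory
open scoped ENNReal

/-- The `j`-th order statistic (1-indexed) of a finite real vector. -/
noncomputable def orderStat {m : ℕ} (v : Fin m → ℝ) (j : ℕ) : ℝ :=
  ((List.ofFn v).mergeSort (fun x y => x ≤ y)).getD (j - 1) 0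

/-- `Quantile b v` is the `⌈b·m⌉`-th order statistic of `v ∈ ℝ^m`, with the conventions
`Quantile b v = ⊤` if `b > 1` and `Quantile b v = ⊥` if `b ≤ 0`. -/
noncomputable def Quantile {m : ℕ} (b : ℝ) (v : Fin m → ℝ) : EReal :=
  if b > 1 then ⊤ else if b ≤ 0 then ⊥ else ((orderStat v ⌈b * m⌉.toNat : ℝ) : EReal)

/-- The deletion operator `Δ⁰_{k,τ}` of the paper (with `k` and `τ` counts of entries). -/
def delta0 {α : Type*} (m k τ : ℕ) (w : Fin m → α) : Fin (m - τ) → α :=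
  fun i =>
    if i.val < m - τ - k then w ⟨i.val, by have := i.isLt; omega⟩
    else w ⟨i.val + τ, by have := i.isLt; omega⟩

/-- The deletion operator `Δ¹_{k,τ}` of the paper. -/
def delta1 {α : Type*} (m k τ : ℕ) (w : Fin m → α) : Fin (m - τ) → α :=
  fun i =>
    if h : k + τ < m then
      if h2 : i.val < m - τ - k then w ⟨i.val + k + τ, by have := i.isLt; omega⟩
      else w ⟨i.val - (m - τ - k), by have := i.isLt; omega⟩
    else w ⟨(i.val + k + τ - m) % m, Nat.mod_lt _ (by have := i.isLt; omega)⟩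

/-- Total variation distance between the laws of two random elements `U, V` under `P`. -/
noncomputable def dTV {Ω γ : Type*} [MeasurableSpace Ω] [MeasurableSpace γ]
    (P : Measure Ω) (U V : Ω → γ) : ℝ :=
  ⨆ E : {E : Set γ // MeasurableSet E}, |(P (U ⁻¹' E.1)).toReal - (P (V ⁻¹' E.1)).toReal|

/-- The switch coefficient `Ψ_{k,τ}(W)` of a random vector `W` of length `m`. -/
noncomputable def switchCoef {Ω α : Type*} [MeasurableSpace Ω] [MeasurableSpace α]
    (P : Measure Ω) {m : ℕ} (W : Ω → Fin m → α) (k τ : ℕ) : ℝ :=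
  dTV P (fun ω => delta0 m k τ (W ω)) (fun ω => delta1 m k τ (W ω))

/-- The averaged switch coefficient `Ψ̄_τ(W) = (1/m) ∑_{k=1}^m Ψ_{k,τ}(W)`. -/
noncomputable def avgSwitchCoef {Ω α : Type*} [MeasurableSpace Ω] [MeasurableSpace α]
    (P : Measure Ω) {m : ℕ} (W : Ω → Fin m → α) (τ : ℕ) : ℝ :=
  (∑ k ∈ Finset.Icc 1 m, switchCoef P W k τ) / m

/-- Stationarity of a time series `Z = (Z_1,…,Z_{n+1})`. -/
def Stationary {Ω α : Type*} [MeasurableSpace Ω] [MeasurableSpace α]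
    (P : Measure Ω) {n : ℕ} (Z : Ω → Fin (n + 1) → α) : Prop :=
  ∀ (ℓ i : ℕ) (h : i + ℓ ≤ n + 1),
    Measure.map (fun ω (j : Fin ℓ) => Z ω ⟨i + j.val, by have := j.isLt; omega⟩) P =
      Measure.map (fun ω (j : Fin ℓ) => Z ω ⟨j.val, by have := j.isLt; omega⟩) P

/-- Exchangeability of a random vector. -/
def Exchangeable {Ω α : Type*} [MeasurableSpace Ω] [MeasurableSpace α]
    (P : Measure Ω) {n : ℕ} (Z : Ω → Fin (n + 1) → α) : Prop :=
  ∀ σ : Equiv.Perm (Fin (n + 1)),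
    Measure.map (fun ω => Z ω ∘ σ) P = Measure.map Z P

/-- The β-mixing coefficient with lag `τ` of `Z`, defined via an independent copy `Z'`. -/
noncomputable def betaMix {Ω α : Type*} [MeasurableSpace Ω] [MeasurableSpace α]
    (P : Measure Ω) (n : ℕ) (Z Z' : Ω → Fin (n + 1) → α) (τ : ℕ) : ℝ :=
  ⨆ k : Fin (n - τ),
    dTV P
      (fun ω (i : Fin (n + 1 - τ)) =>
        if i.val < k.val + 1 then Z ω ⟨i.val, by have := i.isLt; omega⟩
        else Z ω ⟨i.val + τ, by have := i.isLt; omega⟩)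
      (fun ω (i : Fin (n + 1 - τ)) =>
        if i.val < k.val + 1 then Z ω ⟨i.val, by have := i.isLt; omega⟩
        else Z' ω ⟨i.val + τ, by have := i.isLt; omega⟩)


open List in
lemma sublist_getD_bounds {l' l : List ℝ} (hsub : l' <+ l) (hs : l.Pairwise (· ≤ ·)) :
    ∀ i < l'.length, l.getD i 0 ≤ l'.getD i 0 ∧
      l'.getD i 0 ≤ l.getD (i + (l.length - l'.length)) 0 := by
  induction hsub with
  | slnil => intro i hi; simp at hi
  | cons a h ih =>
    rename_i l₁ l₂
    intro i hi
    have hs2 : l₂.Pairwise (· ≤ ·) := hs.of_cons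
    have hle := h.length_le
    obtain ⟨h1, h2⟩ := ih hs2 i hi
    constructor
    · refine le_trans ?_ h1
      have hi2 : i < l₂.length := lt_of_lt_of_le hi hle
      have hi3 : i + 1 < (a :: l₂).length := by simp; omega
      have := hs.rel_get_of_lt (a := ⟨i, by simp; omega⟩) (b := ⟨i + 1, hi3⟩) (by simp)
      simp only [List.get_eq_getElem] at this
      rw [List.getD_eq_getElem _ _ (by simp; omega), List.getD_eq_getElem _ _ hi2]
      simpa using this
    · refine le_trans h2 ?_
      have : i + ((a :: l₂).length - l₁.length) = (i + (l₂.length - l₁.length)) + 1 := by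
        simp; omega
      rw [this]
      simp
  | cons_cons a h ih =>
    rename_i l₁ l₂
    intro i hi
    have hs2 : l₂.Pairwise (· ≤ ·) := hs.of_cons
    have hle := h.length_le
    have hd : (a :: l₂).length - (a :: l₁).length = l₂.length - l₁.length := by simp
    match i with
    | 0 =>
      constructor
      · simp
      · rw [hd]
        rcases Nat.eq_zero_or_pos (l₂.length - l₁.length) with h0 | h0
        · simp [h0]
        · have hlt : 0 + (l₂.length - l₁.length) < (a :: l₂).length := by simp only [List.length_cons]; omega
          rw [List.getD_eq_getElem _ _ hlt]
          simp only [List.getD_cons_zero]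
          have := hs.rel_get_of_le (a := ⟨0, by simp⟩)
            (b := ⟨0 + (l₂.length - l₁.length), hlt⟩) (by simp)
          simpa using this
    | i + 1 =>
      simp only [List.length_cons, Nat.add_lt_add_iff_right] at hi
      obtain ⟨h1, h2⟩ := ih hs2 i hi
      refine ⟨by simpa using h1, ?_⟩
      rw [hd]
      have : i + 1 + (l₂.length - l₁.length) = (i + (l₂.length - l₁.length)) + 1 := by omega
      rw [this]
      simpa using h2


open List in
lemma orderStat_del {N M : ℕ} (S : Fin N → ℝ) (φ : Fin M → Fin N) (hφ : StrictMono φ)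
    {j : ℕ} (h1 : 1 ≤ j) (hj : j ≤ M) :
    orderStat S j ≤ orderStat (S ∘ φ) j ∧ orderStat (S ∘ φ) j ≤ orderStat S (j + (N - M)) := by
  set l : List ℝ := (List.ofFn S).mergeSort (fun x y => x ≤ y) with hl
  set l' : List ℝ := (List.ofFn (S ∘ φ)).mergeSort (fun x y => x ≤ y) with hl'
  have hlen : l.length = N := by simp [hl, List.length_mergeSort]
  have hlen' : l'.length = M := by simp [hl', List.length_mergeSort]
  have hsl : l.Pairwise (· ≤ ·) := by simpa [hl] using List.pairwise_mergeSort' (· ≤ ·) (List.ofFn S)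
  have hsl' : l'.Pairwise (· ≤ ·) := by
    simpa [hl'] using List.pairwise_mergeSort' (· ≤ ·) (List.ofFn (S ∘ φ))
  haveI : IsAntisymm (Fin N) (· < ·) := ⟨fun a b h1 h2 => absurd h2 (asymm h1)⟩
  have hphi : List.ofFn φ <+ List.finRange N := by
    refine List.sublist_of_subperm_of_pairwise (r := (· < ·)) ?_ ?_ ?_
    · exact List.subperm_of_subset ((List.pairwise_ofFn).2 (fun _ _ h => hφ h)).nodup
        (fun x _ => List.mem_finRange x)
    · exact (List.pairwise_ofFn).2 (fun _ _ h => hφ h)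
    · exact (List.pairwise_lt_finRange N)
  have hofn : List.ofFn (S ∘ φ) <+ List.ofFn S := by
    have := hphi.map S
    rwa [List.map_ofFn, ← List.ofFn_eq_map] at this
  have hsub : l' <+ l := by
    refine List.sublist_of_subperm_of_pairwise (r := (· ≤ ·)) ?_ hsl' hsl
    exact ((List.mergeSort_perm (List.ofFn (S ∘ φ)) _).subperm.trans
      hofn.subperm).trans (List.mergeSort_perm (List.ofFn S) _).symm.subperm
  have key := sublist_getD_bounds hsub hsl (j - 1) (by omega)
  have hNM : l.length - l'.length = N - M := by omega
  have hidx : j - 1 + (N - M) = j + (N - M) - 1 := by omega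
  rw [hNM, hidx] at key
  exact key

/-- Stability of quantiles under deletion of `τ` entries. -/
theorem stmt2 {N τ : ℕ} (hN : 1 ≤ N) (hτ : τ ≤ N - 1) (S : Fin N → ℝ)
    (φ : Fin (N - τ) → Fin N) (hφ : StrictMono φ) (a : ℝ) (ha : 0 ≤ a) (ha1 : a ≤ 1) :
    Quantile ((1 - a) * (((N : ℝ) - τ) / N)) S ≤ Quantile (1 - a) (S ∘ φ) ∧
      Quantile (1 - a) (S ∘ φ) ≤ Quantile (1 - a * (((N : ℝ) - τ) / N)) S := by
  have hτN : τ ≤ N := by omega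
  have hM1 : 1 ≤ N - τ := by omega
  have hD : ((N - τ : ℕ) : ℝ) = (N : ℝ) - τ := by
    push_cast [Nat.cast_sub hτN]; ring
  have hN0 : (0 : ℝ) < N := by exact_mod_cast hN
  have hM0 : (0 : ℝ) < ((N - τ : ℕ) : ℝ) := by exact_mod_cast hM1
  have hMN : ((N - τ : ℕ) : ℝ) / N ≤ 1 := by
    rw [div_le_one hN0]; exact_mod_cast Nat.sub_le N τ
  have hMN0 : (0 : ℝ) < ((N - τ : ℕ) : ℝ) / N := div_pos hM0 hN0
  rcases eq_or_lt_of_le ha1 with rfl | halt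
  · have h2 : Quantile (1 - (1:ℝ)) (S ∘ φ) = ⊥ := by norm_num [Quantile]
    constructor
    · have h1 : Quantile ((1 - (1:ℝ)) * (((N : ℝ) - τ) / N)) S = ⊥ := by
        norm_num [Quantile]
      rw [h1, h2]
    · rw [h2]; exact bot_le
  · -- a < 1
    have hb : 0 < 1 - a := by linarith
    set j : ℕ := ⌈(1 - a) * ((N - τ : ℕ) : ℝ)⌉.toNat with hj
    have hcj : (0:ℝ) < (1 - a) * ((N - τ : ℕ) : ℝ) := mul_pos hb hM0
    have hjge : 1 ≤ j := by
      have := Int.ceil_pos.2 hcj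
      omega
    have hjle : j ≤ N - τ := by
      have : ⌈(1 - a) * ((N - τ : ℕ) : ℝ)⌉ ≤ ((N - τ : ℕ) : ℤ) := Int.ceil_le.2 (by
        push_cast; nlinarith [hD])
      omega
    have hmid : Quantile (1 - a) (S ∘ φ) = ((orderStat (S ∘ φ) j : ℝ) : EReal) := by
      rw [Quantile, if_neg (by push_neg; linarith), if_neg (by push_neg; linarith)]
    obtain ⟨key1, key2⟩ := orderStat_del S φ hφ hjge hjle
    constructor
    · -- left inequality
      have hbl0 : 0 < (1 - a) * (((N : ℝ) - τ) / N) := by rw [← hD]; exact mul_pos hb hMN0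
      have hbl1 : (1 - a) * (((N : ℝ) - τ) / N) ≤ 1 := by
        rw [← hD]; exact mul_le_one₀ (by linarith) (le_of_lt hMN0) hMN
      have hind : ⌈(1 - a) * (((N : ℝ) - τ) / N) * N⌉.toNat = j := by
        rw [mul_assoc, div_mul_cancel₀ _ (ne_of_gt hN0), ← hD]
      have hleft : Quantile ((1 - a) * (((N : ℝ) - τ) / N)) S
          = ((orderStat S j : ℝ) : EReal) := by
        rw [Quantile, if_neg (by push_neg; exact hbl1), if_neg (by push_neg; exact hbl0), hind]
      rw [hleft, hmid]
      exact_mod_cast key1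
    · -- right inequality
      have hMN' : ((N : ℝ) - τ) / N ≤ 1 := by rw [← hD]; exact hMN
      have hMN0' : 0 < ((N : ℝ) - τ) / N := by rw [← hD]; exact hMN0
      have hbr1 : 1 - a * (((N : ℝ) - τ) / N) ≤ 1 := by nlinarith
      have hbr0 : 0 < 1 - a * (((N : ℝ) - τ) / N) := by nlinarith
      have hNMt : N - (N - τ) = τ := by omega
      have hceil : ⌈(1 - a * (((N : ℝ) - τ) / N)) * N⌉
          = ⌈(1 - a) * ((N - τ : ℕ) : ℝ)⌉ + (τ : ℤ) := by
        have hexp : (1 - a * (((N : ℝ) - τ) / N)) * N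
            = (1 - a) * ((N - τ : ℕ) : ℝ) + (τ : ℕ) := by
          rw [hD]; field_simp; ring
        rw [hexp, Int.ceil_add_natCast]
      have hind : ⌈(1 - a * (((N : ℝ) - τ) / N)) * N⌉.toNat = j + τ := by
        rw [hceil]
        have := Int.ceil_pos.2 hcj
        omega
      have hright : Quantile (1 - a * (((N : ℝ) - τ) / N)) S
          = ((orderStat S (j + τ) : ℝ) : EReal) := by
        rw [Quantile, if_neg (by push_neg; exact hbr1), if_neg (by push_neg; exact hbr0), hind]
      rw [hright, hmid]
      rw [hNMt] at key2
      exact_mod_cast key2
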